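/- arXiv:1007.2618 — 4 statements merged into one kernel-verified Lean document; each statement's English description precedes it below -/
import Mathlib

section
/- Let S be a finite set of n elements partitioned as S = U ∪ V with U ∩ V = ∅, and let x_1, ..., x_m be independent uniformly random elements of S. Then for every natural number m_1 with m_1 ≤ |U|, the probability that the set {x_1, ..., x_m} contains at most m_1 distinct elements of U (i.e. |{x_1,...,x_m} ∩ U| ≤ m_1) is at most C(|U|, m_1)·((|V| + m_1)/n)^m. -/
open MeasureTheory ProbabilityTheory

/-- Let `S = U ∪ V` be a finite set of `n` elements with `U ∩ V = ∅`, and let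
`x 1, ..., x m` be independent uniformly random elements of `S`.  Then for every `m₁ ≤ |U|`,
the probability that `{x 1, ..., x m}` contains at most `m₁` distinct elements of `U`
is at most `C(|U|, m₁)·((|V| + m₁)/n)^m`. -/
theorem spread_lemma
    {α : Type*} [MeasurableSpace α] [MeasurableSingletonClass α] [DecidableEq α]
    {Ω : Type*} [MeasurableSpace Ω] (μ : Measure Ω) [IsProbabilityMeasure μ]
    (S U V : Finset α) (n : ℕ) (hn : S.card = n) (hn0 : 0 < n)
    (hUV : U ∪ V = S) (hdisj : U ∩ V = ∅)
    (m : ℕ) (x : Fin m → Ω → α)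
    (hmeas : ∀ i, Measurable (x i))
    (hind : iIndepFun x μ)
    (hmem : ∀ i ω, x i ω ∈ S)
    (hunif : ∀ i, ∀ a ∈ S, μ {ω | x i ω = a} = 1 / n)
    (m₁ : ℕ) (hm₁ : m₁ ≤ U.card) :
    (μ {ω | ((Finset.univ.image fun i => x i ω) ∩ U).card ≤ m₁}).toReal
      ≤ (U.card.choose m₁ : ℝ) * (((V.card : ℝ) + m₁) / n) ^ m := by
  classical
  have hU : U ⊆ S := hUV ▸ Finset.subset_union_left
  have hV : V ⊆ S := hUV ▸ Finset.subset_union_right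
  -- per-index probability of landing in a subset W of S
  have hW : ∀ (i : Fin m) (W : Finset α), W ⊆ S →
      μ (x i ⁻¹' ↑W) = (W.card : ENNReal) / n := by
    intro i W hWS
    have he : x i ⁻¹' ↑W = ⋃ a ∈ W, {ω | x i ω = a} := by
      ext ω; simp
    rw [he, measure_biUnion_finset]
    · rw [Finset.sum_congr rfl (fun a ha => hunif i a (hWS ha))]
      simp [Finset.sum_const, nsmul_eq_mul, div_eq_mul_inv, one_div]
    · intro a _ b _ hab
      simp only [Function.onFun, Set.disjoint_left]
      intro ω h1 h2
      exact hab (h1.symm.trans h2)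
    · intro a _
      exact hmeas i (measurableSet_singleton a)
  -- the big union bound
  have hsub : {ω | ((Finset.univ.image fun i => x i ω) ∩ U).card ≤ m₁}
      ⊆ ⋃ T ∈ U.powersetCard m₁, ⋂ i, x i ⁻¹' ↑(V ∪ T) := by
    intro ω hω
    obtain ⟨T, hAT, hTU, hTcard⟩ := Finset.exists_subsuperset_card_eq
      Finset.inter_subset_right hω hm₁
    refine Set.mem_biUnion (Finset.mem_powersetCard.2 ⟨hTU, hTcard⟩) ?_
    simp only [Set.mem_iInter, Set.mem_preimage, Finset.coe_union, Set.mem_union,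
      Finset.mem_coe]
    intro i
    have hx := hmem i ω
    rw [← hUV, Finset.mem_union] at hx
    rcases hx with hU' | hV'
    · right
      exact hAT (Finset.mem_inter.2 ⟨Finset.mem_image.2 ⟨i, Finset.mem_univ i, rfl⟩, hU'⟩)
    · left; exact hV'
  have hdisjT : ∀ T ∈ U.powersetCard m₁, Disjoint V T := by
    intro T hT
    rw [Finset.mem_powersetCard] at hT
    have : Disjoint U V := Finset.disjoint_iff_inter_eq_empty.2 hdisj
    exact (this.mono_left hT.1).symm
  -- probability of fixed-T event
  have hfix : ∀ T ∈ U.powersetCard m₁,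
      μ (⋂ i, x i ⁻¹' ↑(V ∪ T)) = (((V.card : ENNReal) + m₁) / n) ^ m := by
    intro T hT
    have hTS : (V ∪ T : Finset α) ⊆ S := by
      rw [Finset.mem_powersetCard] at hT
      exact Finset.union_subset hV (hT.1.trans hU)
    have := hind.measure_inter_preimage_eq_mul (S := Finset.univ)
      (sets := fun _ => (↑(V ∪ T) : Set α)) (fun i _ => (V ∪ T).measurableSet)
    simp only [Finset.mem_univ, Set.iInter_true] at this
    rw [this]
    have hcard : (V ∪ T).card = V.card + m₁ := by
      rw [Finset.mem_powersetCard] at hT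
      rw [Finset.card_union_of_disjoint (hdisjT T (Finset.mem_powersetCard.2 hT)), hT.2]
    rw [Finset.prod_congr rfl fun i _ => (hW i _ hTS).trans (by rw [hcard])]
    simp [Finset.prod_const]
  -- union bound
  have hbound : μ {ω | ((Finset.univ.image fun i => x i ω) ∩ U).card ≤ m₁}
      ≤ (U.card.choose m₁ : ENNReal) * (((V.card : ENNReal) + m₁) / n) ^ m := by
    calc μ {ω | ((Finset.univ.image fun i => x i ω) ∩ U).card ≤ m₁}
        ≤ μ (⋃ T ∈ U.powersetCard m₁, ⋂ i, x i ⁻¹' ↑(V ∪ T)) := measure_mono hsub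
      _ ≤ ∑ T ∈ U.powersetCard m₁, μ (⋂ i, x i ⁻¹' ↑(V ∪ T)) := measure_biUnion_finset_le _ _
      _ = ∑ T ∈ U.powersetCard m₁, (((V.card : ENNReal) + m₁) / n) ^ m :=
          Finset.sum_congr rfl hfix
      _ = (U.card.choose m₁ : ENNReal) * (((V.card : ENNReal) + m₁) / n) ^ m := by
          rw [Finset.sum_const, Finset.card_powersetCard, nsmul_eq_mul]
  have hne : ((U.card.choose m₁ : ENNReal) * (((V.card : ENNReal) + m₁) / n) ^ m) ≠ ⊤ := by
    apply ENNReal.mul_ne_top (by simp)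
    apply ENNReal.pow_ne_top
    exact ne_of_lt (ENNReal.div_lt_top (by simp) (by simp [hn0.ne']))
  calc (μ {ω | ((Finset.univ.image fun i => x i ω) ∩ U).card ≤ m₁}).toReal
      ≤ ((U.card.choose m₁ : ENNReal) * (((V.card : ENNReal) + m₁) / n) ^ m).toReal :=
        ENNReal.toReal_mono hne hbound
    _ = (U.card.choose m₁ : ℝ) * (((V.card : ℝ) + m₁) / n) ^ m := by
        rw [ENNReal.toReal_mul, ENNReal.toReal_pow, ENNReal.toReal_div,
          ENNReal.toReal_add (by simp) (by simp)]
        simp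
end

section
/- Fix constants β ∈ (0,1), γ ∈ (0,1) and ε ∈ (0,1), and set c = 1 − β/2 and δ_c = (ln(1/c))/2. There exists N such that for all n ≥ N the following holds: let S_1 and S_2 be finite sets of n elements with |S_1 ∩ S_2| ≥ β·n; let m and m_1 be positive integers with m_1 ≤ δ_c·m / ln(β·n) and m ≤ n^{1−ε}; let C be a set with |C| ≤ γ·m_1; let x_1, ..., x_m be independent uniformly random elements of S_1 and y_1, ..., y_m be independent uniformly random elements of S_2, all 2m draws mutually independent; let A = {x_1,...,x_m} and B = {y_1,...,y_m}. Then the probability that (A − C) ∩ (B − C) = ∅ is at most 2·e^{−(1−γ)·m_1·m / n}. -/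
set_option maxHeartbeats 4000000

open MeasureTheory ProbabilityTheory Real

open Finset Filter in
private lemma countX' {α : Type} [DecidableEq α] (S₁ D₀ : Finset α) (hD : D₀ ⊆ S₁) (m k : ℕ)
    (hk : k ≤ D₀.card) :
    ((Fintype.piFinset fun _ : Fin m => S₁).filter
      (fun a => ((Finset.univ.image a) ∩ D₀).card < k + 1)).card
      ≤ D₀.card.choose k * ((S₁.card - D₀.card) + k) ^ m := by
  have hsub : ((Fintype.piFinset fun _ : Fin m => S₁).filter
      (fun a => ((Finset.univ.image a) ∩ D₀).card < k + 1)) ⊆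
      (D₀.powersetCard k).biUnion
        (fun W => Fintype.piFinset fun _ : Fin m => (S₁ \ D₀) ∪ W) := by
    intro a ha
    rw [mem_filter, Fintype.mem_piFinset] at ha
    obtain ⟨W, hWsub, hWD, hWcard⟩ := Finset.exists_subsuperset_card_eq
      (inter_subset_right (s₁ := Finset.univ.image a))
      (Nat.lt_succ_iff.mp ha.2) hk
    rw [mem_biUnion]
    refine ⟨W, mem_powersetCard.mpr ⟨hWD, hWcard⟩, Fintype.mem_piFinset.mpr fun i => ?_⟩
    by_cases h : a i ∈ D₀
    · exact mem_union_right _ (hWsub (mem_inter.mpr ⟨mem_image_of_mem a (mem_univ i), h⟩))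
    · exact mem_union_left _ (mem_sdiff.mpr ⟨ha.1 i, h⟩)
  calc _ ≤ ((D₀.powersetCard k).biUnion
        (fun W => Fintype.piFinset fun _ : Fin m => (S₁ \ D₀) ∪ W)).card :=
          Finset.card_le_card hsub
    _ ≤ ∑ W ∈ D₀.powersetCard k,
          (Fintype.piFinset fun _ : Fin m => (S₁ \ D₀) ∪ W).card := Finset.card_biUnion_le
    _ ≤ ∑ _W ∈ D₀.powersetCard k, ((S₁.card - D₀.card) + k) ^ m := by
        refine Finset.sum_le_sum fun W hW => ?_
        rw [Fintype.card_piFinset_const]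
        refine Nat.pow_le_pow_left ?_ m
        calc ((S₁ \ D₀) ∪ W).card ≤ (S₁ \ D₀).card + W.card := card_union_le _ _
          _ = (S₁.card - D₀.card) + k := by
              rw [card_sdiff_of_subset hD, (mem_powersetCard.mp hW).2]
    _ = D₀.card.choose k * ((S₁.card - D₀.card) + k) ^ m := by
        rw [Finset.sum_const, card_powersetCard, smul_eq_mul]

open Finset in
private lemma card_filter_prod' {A B : Type} [DecidableEq A] [DecidableEq B]
    (X : Finset A) (Y : Finset B) (p : A × B → Prop) [DecidablePred p] (M : ℕ)
    (h : ∀ a ∈ X, (Y.filter fun b => p (a, b)).card ≤ M) :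
    ((X ×ˢ Y).filter p).card ≤ X.card * M := by
  have hsub : (X ×ˢ Y).filter p ⊆
      X.biUnion (fun a => (Y.filter fun b => p (a, b)).image (Prod.mk a)) := by
    intro ab hab
    rw [mem_filter, mem_product] at hab
    rw [mem_biUnion]
    exact ⟨ab.1, hab.1.1, mem_image.mpr ⟨ab.2, mem_filter.mpr ⟨hab.1.2, by
      simpa using hab.2⟩, rfl⟩⟩
  calc _ ≤ _ := Finset.card_le_card hsub
    _ ≤ ∑ a ∈ X, ((Y.filter fun b => p (a, b)).image (Prod.mk a)).card :=
        Finset.card_biUnion_le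
    _ ≤ ∑ _a ∈ X, M := Finset.sum_le_sum fun a ha =>
        (Finset.card_image_le).trans (h a ha)
    _ = X.card * M := by rw [Finset.sum_const, smul_eq_mul]

open Finset in
open scoped ENNReal in
private lemma measure_step' {α Ω : Type} [MeasurableSpace α] [MeasurableSingletonClass α]
    [DecidableEq α] [MeasurableSpace Ω] (μ : Measure Ω) (n m : ℕ)
    (S₁ S₂ : Finset α) (z : Fin m ⊕ Fin m → Ω → α)
    (hzind : iIndepFun z μ)
    (hz₁mem : ∀ i : Fin m, ∀ ω, z (Sum.inl i) ω ∈ S₁)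
    (hz₁unif : ∀ i : Fin m, ∀ a ∈ S₁, μ {ω | z (Sum.inl i) ω = a} = 1 / n)
    (hz₂mem : ∀ i : Fin m, ∀ ω, z (Sum.inr i) ω ∈ S₂)
    (hz₂unif : ∀ i : Fin m, ∀ a ∈ S₂, μ {ω | z (Sum.inr i) ω = a} = 1 / n)
    (q : (Fin m → α) × (Fin m → α) → Prop) [DecidablePred q] :
    μ {ω | q (fun i => z (Sum.inl i) ω, fun i => z (Sum.inr i) ω)} ≤
      ((((Fintype.piFinset fun _ : Fin m => S₁) ×ˢ
          (Fintype.piFinset fun _ : Fin m => S₂)).filter q).card : ℝ≥0∞) *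
        ((1:ℝ≥0∞) / n) ^ (m + m) := by
  set X := Fintype.piFinset fun _ : Fin m => S₁ with hX
  set Y := Fintype.piFinset fun _ : Fin m => S₂ with hY
  have hEsub : {ω | q (fun i => z (Sum.inl i) ω, fun i => z (Sum.inr i) ω)} ⊆
      ⋃ v ∈ (X ×ˢ Y).filter q,
        {ω | (∀ i, z (Sum.inl i) ω = v.1 i) ∧ (∀ i, z (Sum.inr i) ω = v.2 i)} := by
    intro ω hω
    refine Set.mem_iUnion₂.mpr
      ⟨((fun i => z (Sum.inl i) ω, fun i => z (Sum.inr i) ω) : _ × _), ?_, ?_⟩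
    · refine mem_filter.mpr ⟨mem_product.mpr ⟨?_, ?_⟩, hω⟩
      · exact Fintype.mem_piFinset.mpr fun i => hz₁mem i ω
      · exact Fintype.mem_piFinset.mpr fun i => hz₂mem i ω
    · exact ⟨fun i => rfl, fun i => rfl⟩
  have hatom : ∀ v ∈ X ×ˢ Y,
      μ {ω | (∀ i, z (Sum.inl i) ω = v.1 i) ∧ (∀ i, z (Sum.inr i) ω = v.2 i)} =
        ((1:ℝ≥0∞) / n) ^ (m + m) := by
    intro v hv
    rw [mem_product] at hv
    have hset : {ω | (∀ i, z (Sum.inl i) ω = v.1 i) ∧ (∀ i, z (Sum.inr i) ω = v.2 i)} =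
        ⋂ i ∈ (Finset.univ : Finset (Fin m ⊕ Fin m)),
          z i ⁻¹' {Sum.elim v.1 v.2 i} := by
      ext ω
      simp only [Set.mem_setOf_eq, Set.mem_iInter, Set.mem_preimage, Set.mem_singleton_iff,
        Finset.mem_univ, Set.iInter_true]
      constructor
      · rintro ⟨h1, h2⟩ i
        cases i with
        | inl j => exact h1 j
        | inr j => exact h2 j
      · intro h
        exact ⟨fun j => h (Sum.inl j), fun j => h (Sum.inr j)⟩
    rw [hset, hzind.measure_inter_preimage_eq_mul Finset.univ
      (fun i _ => measurableSet_singleton _)]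
    have hfac : ∀ i : Fin m ⊕ Fin m, μ (z i ⁻¹' {Sum.elim v.1 v.2 i}) = (1:ℝ≥0∞) / n := by
      intro i
      cases i with
      | inl j =>
        have : z (Sum.inl j) ⁻¹' {Sum.elim v.1 v.2 (Sum.inl j)} =
            {ω | z (Sum.inl j) ω = v.1 j} := rfl
        rw [this]
        exact hz₁unif j (v.1 j) (Fintype.mem_piFinset.mp hv.1 j)
      | inr j =>
        have : z (Sum.inr j) ⁻¹' {Sum.elim v.1 v.2 (Sum.inr j)} =
            {ω | z (Sum.inr j) ω = v.2 j} := rfl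
        rw [this]
        exact hz₂unif j (v.2 j) (Fintype.mem_piFinset.mp hv.2 j)
    calc ∏ i : Fin m ⊕ Fin m, μ (z i ⁻¹' {Sum.elim v.1 v.2 i})
        = ∏ _i : Fin m ⊕ Fin m, ((1:ℝ≥0∞) / n) := Finset.prod_congr rfl fun i _ => hfac i
      _ = ((1:ℝ≥0∞) / n) ^ (m + m) := by
          rw [Finset.prod_const, Finset.card_univ]
          simp [Fintype.card_sum]
  calc μ {ω | q (fun i => z (Sum.inl i) ω, fun i => z (Sum.inr i) ω)}
      ≤ μ (⋃ v ∈ (X ×ˢ Y).filter q,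
        {ω | (∀ i, z (Sum.inl i) ω = v.1 i) ∧ (∀ i, z (Sum.inr i) ω = v.2 i)}) :=
        measure_mono hEsub
    _ ≤ ∑ v ∈ (X ×ˢ Y).filter q,
        μ {ω | (∀ i, z (Sum.inl i) ω = v.1 i) ∧ (∀ i, z (Sum.inr i) ω = v.2 i)} :=
        measure_biUnion_finset_le _ _
    _ = ∑ _v ∈ (X ×ˢ Y).filter q, ((1:ℝ≥0∞) / n) ^ (m + m) :=
        Finset.sum_congr rfl fun v hv => hatom v (Finset.mem_of_mem_filter v hv)
    _ = _ := by rw [Finset.sum_const, nsmul_eq_mul]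


/-- Fix `β, γ, ε ∈ (0,1)`, `c = 1 − β/2`, `δ_c = ln(1/c)/2`.  For all large enough `n`:
if `S₁, S₂` are `n`-element finite sets with `|S₁ ∩ S₂| ≥ β·n`, `m, m₁` are positive integers
with `m₁ ≤ δ_c·m / ln(β·n)` and `m ≤ n^{1−ε}`, `C` is a set with `|C| ≤ γ·m₁`, and
`x 1, ..., x m` (resp. `y 1, ..., y m`) are uniformly random elements of `S₁` (resp. `S₂`),
all `2m` draws mutually independent, then with `A = {x 1,...,x m}` and `B = {y 1,...,y m}`
we have `Pr[(A − C) ∩ (B − C) = ∅] ≤ 2·e^{−(1−γ)·m₁·m/n}`. -/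
theorem intersection_lemma
    (β γ ε : ℝ) (hβ : β ∈ Set.Ioo (0 : ℝ) 1) (hγ : γ ∈ Set.Ioo (0 : ℝ) 1)
    (hε : ε ∈ Set.Ioo (0 : ℝ) 1) :
    ∃ N : ℕ, ∀ n : ℕ, N ≤ n →
      ∀ (α : Type) [MeasurableSpace α] [MeasurableSingletonClass α] [DecidableEq α]
        (Ω : Type) [MeasurableSpace Ω] (μ : Measure Ω) [IsProbabilityMeasure μ]
        (S₁ S₂ : Finset α), S₁.card = n → S₂.card = n → β * n ≤ ((S₁ ∩ S₂).card : ℝ) →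
      ∀ m m₁ : ℕ, 0 < m → 0 < m₁ →
        (m₁ : ℝ) ≤ (Real.log (1 / (1 - β / 2)) / 2) * m / Real.log (β * n) →
        (m : ℝ) ≤ (n : ℝ) ^ ((1 : ℝ) - ε) →
      ∀ C : Finset α, (C.card : ℝ) ≤ γ * m₁ →
      ∀ z : Fin m ⊕ Fin m → Ω → α,
        (∀ i, Measurable (z i)) →
        iIndepFun z μ →
        (∀ i : Fin m, ∀ ω, z (Sum.inl i) ω ∈ S₁) →
        (∀ i : Fin m, ∀ a ∈ S₁, μ {ω | z (Sum.inl i) ω = a} = 1 / n) →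
        (∀ i : Fin m, ∀ ω, z (Sum.inr i) ω ∈ S₂) →
        (∀ i : Fin m, ∀ a ∈ S₂, μ {ω | z (Sum.inr i) ω = a} = 1 / n) →
        (μ {ω | ((Finset.univ.image fun i => z (Sum.inl i) ω) \ C) ∩
                  ((Finset.univ.image fun i => z (Sum.inr i) ω) \ C) = ∅}).toReal
          ≤ 2 * Real.exp (-((1 - γ) * m₁ * m / n)) := by
  classical
  obtain ⟨hβ0, hβ1⟩ := hβ
  obtain ⟨hγ0, hγ1⟩ := hγ
  obtain ⟨hε0, hε1⟩ := hε
  set dc : ℝ := Real.log (1 / (1 - β / 2)) / 2 with hdc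
  have hc0 : (0:ℝ) < 1 - β / 2 := by linarith
  have hc1 : 1 - β / 2 < 1 := by linarith
  have hdc0 : 0 < dc := by
    have h1 : 1 < 1 / (1 - β / 2) := by
      rw [lt_div_iff₀ hc0]; linarith
    have := Real.log_pos h1
    rw [hdc]; linarith
  clear_value dc
  -- choose N
  have h1 : Filter.Tendsto (fun n : ℕ => Real.log (β * n)) Filter.atTop Filter.atTop :=
    Real.tendsto_log_atTop.comp ((tendsto_natCast_atTop_atTop).const_mul_atTop hβ0)
  have h2 : Filter.Tendsto (fun n : ℕ => (n:ℝ) ^ ε) Filter.atTop Filter.atTop :=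
    (tendsto_rpow_atTop hε0).comp tendsto_natCast_atTop_atTop
  have hev : ∀ᶠ n : ℕ in Filter.atTop, 1 ≤ Real.log (β * n) ∧
      2 * Real.log (1/β) ≤ Real.log (β * n) ∧
      (2:ℝ) ≤ (n:ℝ) ^ ε ∧ 2 * dc / β ≤ (n:ℝ) ^ ε ∧ 1 ≤ n :=
    (h1.eventually_ge_atTop 1).and ((h1.eventually_ge_atTop _).and
      ((h2.eventually_ge_atTop 2).and ((h2.eventually_ge_atTop _).and
        (Filter.eventually_ge_atTop 1))))
  obtain ⟨N, hN⟩ := Filter.eventually_atTop.mp hev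
  refine ⟨N, ?_⟩
  intro n hn α _ _ _ Ω _ μ _ S₁ S₂ hS₁ hS₂ hD m m₁ hm0 hm₁0 hm₁ hmn C hC z hzm hzind h1m h1u h2m h2u
  obtain ⟨hL1, hL2, hP2, hPd, hn1⟩ := hN n hn
  -- basic real facts
  have hn0 : (0:ℝ) < n := by exact_mod_cast hn1
  have hL0 : (0:ℝ) < Real.log (β * n) := lt_of_lt_of_le one_pos hL1
  have hnε0 : (0:ℝ) < (n:ℝ) ^ ε := Real.rpow_pos_of_pos hn0 ε
  have hmn' : (m:ℝ) ≤ (n:ℝ) / (n:ℝ) ^ ε := by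
    have h := hmn
    rw [show (1:ℝ) - ε = 1 - ε from rfl, Real.rpow_sub hn0, Real.rpow_one] at h
    exact h
  have hm_half : (m:ℝ) / n ≤ 1 / 2 := by
    have h' : (n:ℝ) / (n:ℝ) ^ ε ≤ n / 2 :=
      div_le_div_of_nonneg_left hn0.le two_pos hP2
    have h'' : (m:ℝ) ≤ n / 2 := hmn'.trans h'
    rw [div_le_div_iff₀ hn0 two_pos]; linarith
  have hm₁m : (m₁ : ℝ) ≤ dc * m := by
    refine hm₁.trans (div_le_self ?_ hL1)
    positivity
  have hm₁L : (m₁ : ℝ) * Real.log (β * n) ≤ dc * m := (le_div_iff₀ hL0).mp hm₁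
  have hdle : dc ≤ β / 2 * (n:ℝ) ^ ε := by
    have := (div_le_iff₀ hβ0).mp hPd
    linarith
  have hm₁βn : (m₁ : ℝ) ≤ β / 2 * n := by
    have h3 : dc * m ≤ (β / 2 * (n:ℝ) ^ ε) * ((n:ℝ) / (n:ℝ) ^ ε) :=
      mul_le_mul hdle hmn' (Nat.cast_nonneg m) (by positivity)
    have h4 : (β / 2 * (n:ℝ) ^ ε) * ((n:ℝ) / (n:ℝ) ^ ε) = β / 2 * n := by
      field_simp
    linarith [hm₁m]
  have hm₁n : m₁ ≤ n := by
    have : (m₁:ℝ) ≤ (n:ℝ) := hm₁βn.trans (by nlinarith)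
    exact_mod_cast this
  have hCm₁ : C.card ≤ m₁ := by
    have : (C.card : ℝ) ≤ (m₁ : ℝ) := hC.trans (by nlinarith [Nat.cast_nonneg (α := ℝ) m₁])
    exact_mod_cast this
  -- D₀ facts
  set D₀ := S₁ ∩ S₂ with hD₀
  set d := D₀.card with hd
  have hdn : d ≤ n := by
    rw [hd, ← hS₁]; exact Finset.card_le_card (Finset.inter_subset_left)
  have hm₁d : m₁ ≤ d := by
    have : (m₁:ℝ) ≤ (d:ℝ) := hm₁βn.trans (le_trans (by nlinarith [mul_nonneg hβ0.le hn0.le]) hD)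
    exact_mod_cast this
  -- the predicate and counting
  set q : (Fin m → α) × (Fin m → α) → Prop :=
    fun ab => ((Finset.univ.image ab.1) \ C) ∩ ((Finset.univ.image ab.2) \ C) = ∅ with hq
  set X := Fintype.piFinset fun _ : Fin m => S₁ with hX
  set Y := Fintype.piFinset fun _ : Fin m => S₂ with hY
  set K := ((X ×ˢ Y).filter q).card with hK
  -- measure step
  have hμ := measure_step' μ n m S₁ S₂ z hzind h1m h1u h2m h2u q
  -- counting step
  have hcount : K ≤ d.choose (m₁ - 1) * ((n - d) + (m₁ - 1)) ^ m * n ^ m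
      + n ^ m * (n - (m₁ - C.card)) ^ m := by
    set p₁ : (Fin m → α) × (Fin m → α) → Prop :=
      fun ab => ((Finset.univ.image ab.1) ∩ D₀).card < m₁ with hp₁
    set p₂ : (Fin m → α) × (Fin m → α) → Prop :=
      fun ab => m₁ ≤ ((Finset.univ.image ab.1) ∩ D₀).card ∧ q ab with hp₂
    have hsplit : (X ×ˢ Y).filter q ⊆ ((X ×ˢ Y).filter p₁) ∪ ((X ×ˢ Y).filter p₂) := by
      intro ab hab
      rw [Finset.mem_filter] at hab
      rcases lt_or_ge ((Finset.univ.image ab.1) ∩ D₀).card m₁ with h | h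
      · exact Finset.mem_union_left _ (Finset.mem_filter.mpr ⟨hab.1, h⟩)
      · exact Finset.mem_union_right _ (Finset.mem_filter.mpr ⟨hab.1, ⟨h, hab.2⟩⟩)
    have hone : ((X ×ˢ Y).filter p₁).card
        ≤ d.choose (m₁ - 1) * ((n - d) + (m₁ - 1)) ^ m * n ^ m := by
      have hsub1 : (X ×ˢ Y).filter p₁ ⊆
          (X.filter (fun a => ((Finset.univ.image a) ∩ D₀).card < m₁)) ×ˢ Y := by
        intro ab hab
        rw [Finset.mem_filter, Finset.mem_product] at hab
        exact Finset.mem_product.mpr ⟨Finset.mem_filter.mpr ⟨hab.1.1, hab.2⟩, hab.1.2⟩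
      calc ((X ×ˢ Y).filter p₁).card
          ≤ ((X.filter (fun a => ((Finset.univ.image a) ∩ D₀).card < m₁)) ×ˢ Y).card :=
            Finset.card_le_card hsub1
        _ = (X.filter (fun a => ((Finset.univ.image a) ∩ D₀).card < m₁)).card * Y.card :=
            Finset.card_product _ _
        _ ≤ (d.choose (m₁ - 1) * ((n - d) + (m₁ - 1)) ^ m) * n ^ m := by
            refine Nat.mul_le_mul ?_ ?_
            · have hcx := countX' S₁ D₀ Finset.inter_subset_left m (m₁ - 1)
                (le_trans (Nat.sub_le _ _) hm₁d)
              rw [Nat.sub_add_cancel hm₁0, hS₁] at hcx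
              exact hcx
            · rw [hY, Fintype.card_piFinset_const, hS₂]
        _ = d.choose (m₁ - 1) * ((n - d) + (m₁ - 1)) ^ m * n ^ m := by ring
    have htwo : ((X ×ˢ Y).filter p₂).card ≤ n ^ m * (n - (m₁ - C.card)) ^ m := by
      have hb : ∀ a ∈ X, (Y.filter fun b => p₂ (a, b)).card ≤ (n - (m₁ - C.card)) ^ m := by
        intro a _
        by_cases hgood : m₁ ≤ ((Finset.univ.image a) ∩ D₀).card
        · have hsubY : Y.filter (fun b => p₂ (a, b)) ⊆
              Fintype.piFinset (fun _ : Fin m =>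
                S₂ \ (((Finset.univ.image a) ∩ D₀) \ C)) := by
            intro b hb'
            rw [Finset.mem_filter] at hb'
            obtain ⟨hbY, hp⟩ := hb'
            simp only [hp₂, hq] at hp
            obtain ⟨-, hq'⟩ := hp
            refine Fintype.mem_piFinset.mpr fun j => Finset.mem_sdiff.mpr
              ⟨Fintype.mem_piFinset.mp hbY j, fun hbT => ?_⟩
            rw [Finset.mem_sdiff, Finset.mem_inter] at hbT
            have hmem : b j ∈ ((Finset.univ.image a) \ C) ∩ ((Finset.univ.image b) \ C) :=
              Finset.mem_inter.mpr ⟨Finset.mem_sdiff.mpr ⟨hbT.1.1, hbT.2⟩,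
                Finset.mem_sdiff.mpr ⟨Finset.mem_image_of_mem b (Finset.mem_univ j), hbT.2⟩⟩
            rw [hq'] at hmem
            exact absurd hmem (Finset.notMem_empty _)
          have hTS₂ : (((Finset.univ.image a) ∩ D₀) \ C) ⊆ S₂ := by
            intro t ht
            have h1' := (Finset.mem_inter.mp (Finset.mem_sdiff.mp ht).1).2
            rw [hD₀] at h1'
            exact (Finset.mem_inter.mp h1').2
          have hT : m₁ - C.card ≤ (((Finset.univ.image a) ∩ D₀) \ C).card :=
            le_trans (Nat.sub_le_sub_right hgood C.card) (Finset.le_card_sdiff C _)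
          calc (Y.filter fun b => p₂ (a, b)).card
              ≤ (Fintype.piFinset (fun _ : Fin m =>
                  S₂ \ (((Finset.univ.image a) ∩ D₀) \ C))).card :=
                Finset.card_le_card hsubY
            _ = (S₂ \ (((Finset.univ.image a) ∩ D₀) \ C)).card ^ m :=
                Fintype.card_piFinset_const _ _
            _ = (n - (((Finset.univ.image a) ∩ D₀) \ C).card) ^ m := by
                rw [Finset.card_sdiff_of_subset hTS₂, hS₂]
            _ ≤ (n - (m₁ - C.card)) ^ m :=
                Nat.pow_le_pow_left (Nat.sub_le_sub_left hT n) m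
        · have hemp : Y.filter (fun b => p₂ (a, b)) = ∅ := by
            refine Finset.filter_false_of_mem fun b _ => ?_
            simp only [hp₂]
            exact fun hp => hgood hp.1
          rw [hemp]
          simp
      calc ((X ×ˢ Y).filter p₂).card ≤ X.card * (n - (m₁ - C.card)) ^ m :=
          card_filter_prod' X Y p₂ _ hb
        _ = n ^ m * (n - (m₁ - C.card)) ^ m := by
            rw [hX, Fintype.card_piFinset_const, hS₁]
    calc K ≤ (((X ×ˢ Y).filter p₁) ∪ ((X ×ˢ Y).filter p₂)).card :=
        Finset.card_le_card hsplit
      _ ≤ ((X ×ˢ Y).filter p₁).card + ((X ×ˢ Y).filter p₂).card := Finset.card_union_le _ _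
      _ ≤ _ := Nat.add_le_add hone htwo
  -- real analysis step
  have hfinal : (K : ℝ) * ((1:ℝ) / n) ^ (m + m) ≤ 2 * Real.exp (-((1 - γ) * m₁ * m / n)) := by
    clear hμ hK
    clear_value K
    clear hq hX hY
    clear q X Y hzind hzm h1u h2u h1m h2m hev hN h1 h2
    set E := Real.exp (-((1 - γ) * m₁ * m / n)) with hE
    have hE0 : 0 < E := Real.exp_pos _
    have hcast1 : ((n - d : ℕ):ℝ) = (n:ℝ) - d := Nat.cast_sub hdn
    have hcast2 : ((m₁ - 1 : ℕ):ℝ) ≤ (m₁:ℝ) := Nat.cast_le.mpr (Nat.sub_le m₁ 1)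
    have hbase : ((n - d:ℕ):ℝ) + ((m₁ - 1:ℕ):ℝ) ≤ (1 - β/2) * n := by
      have h5 : (n:ℝ) - d ≤ (1 - β) * n := by linarith [hD]
      rw [hcast1]; linarith [hm₁βn]
    have hchoose : ((d.choose (m₁-1)) : ℝ) ≤ (n:ℝ)^m₁ := by
      have hnat : d.choose (m₁-1) ≤ n ^ m₁ :=
        le_trans (Nat.choose_le_pow _ _) (le_trans (Nat.pow_le_pow_left hdn _)
          (Nat.pow_le_pow_right (by omega) (Nat.sub_le m₁ 1)))
      exact_mod_cast hnat
    have hkey : (n:ℝ)^m₁ * (1 - β/2)^m ≤ E := by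
      have hlogc : Real.log (1 - β/2) = -(2 * dc) := by
        rw [hdc, one_div, Real.log_inv]; ring
      have hlogn : Real.log n = Real.log (β * n) + Real.log (1/β) := by
        rw [Real.log_mul (ne_of_gt hβ0) (ne_of_gt hn0), one_div, Real.log_inv]; ring
      have e2 : (m₁:ℝ) * Real.log (1/β) ≤ dc * m / 2 := by
        have hl : Real.log (1/β) ≤ Real.log (β*n) / 2 := by linarith
        have hml := mul_le_mul_of_nonneg_left hl (Nat.cast_nonneg (α := ℝ) m₁)
        have hrw : (m₁:ℝ) * (Real.log (β*n) / 2) = ((m₁:ℝ) * Real.log (β*n)) / 2 := by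
          ring
        linarith [hm₁L, hml, hrw]
      have e3 : (1 - γ) * m₁ * m / n ≤ dc * m / 2 := by
        have hnum : (1 - γ) * (m₁:ℝ) * m ≤ (m₁:ℝ) * m := by
          nlinarith [mul_nonneg (Nat.cast_nonneg (α := ℝ) m₁)
            (Nat.cast_nonneg (α := ℝ) m)]
        have h6 : (1 - γ) * (m₁:ℝ) * m / n ≤ (m₁:ℝ) * m / n :=
          div_le_div_of_nonneg_right hnum hn0.le
        have h7 : (m₁:ℝ) * ((m:ℝ)/n) ≤ (dc * m) * (1/2) :=
          mul_le_mul hm₁m hm_half (by positivity) (by positivity)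
        calc (1 - γ) * (m₁:ℝ) * m / n ≤ (m₁:ℝ) * m / n := h6
          _ = (m₁:ℝ) * ((m:ℝ)/n) := by ring
          _ ≤ (dc * m) * (1/2) := h7
          _ = dc * m / 2 := by ring
      have hexp : (m₁:ℝ) * Real.log n + m * Real.log (1 - β/2)
          ≤ -((1 - γ) * m₁ * m / n) := by
        rw [hlogn, hlogc]
        have hrw2 : (m₁:ℝ) * (Real.log (β*n) + Real.log (1/β))
            = (m₁:ℝ) * Real.log (β*n) + (m₁:ℝ) * Real.log (1/β) := by ring
        have hrw3 : (m:ℝ) * -(2 * dc) = -(2 * (dc * m)) := by ring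
        linarith [hm₁L, e2, e3, hrw2, hrw3]
      have hn1' : (n:ℝ)^m₁ = Real.exp ((m₁:ℝ) * Real.log n) := by
        rw [← Real.exp_log (pow_pos hn0 m₁), Real.log_pow]
      have hc' : (1 - β/2)^m = Real.exp ((m:ℝ) * Real.log (1 - β/2)) := by
        rw [← Real.exp_log (pow_pos hc0 m), Real.log_pow]
      rw [hn1', hc', ← Real.exp_add, hE]
      exact Real.exp_le_exp.mpr hexp
    have hA : ((d.choose (m₁-1)) : ℝ) * (((n-d:ℕ):ℝ) + ((m₁-1:ℕ):ℝ))^m * (n:ℝ)^m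
        ≤ E * ((n:ℝ)^m * (n:ℝ)^m) := by
      have h8 : (((n-d:ℕ):ℝ) + ((m₁-1:ℕ):ℝ))^m ≤ ((1 - β/2) * n)^m :=
        pow_le_pow_left₀ (by positivity) hbase m
      calc ((d.choose (m₁-1)) : ℝ) * (((n-d:ℕ):ℝ) + ((m₁-1:ℕ):ℝ))^m * (n:ℝ)^m
          ≤ ((n:ℝ)^m₁ * ((1 - β/2) * n)^m) * (n:ℝ)^m := by
            refine mul_le_mul (mul_le_mul hchoose h8 (by positivity) (by positivity))
              le_rfl (by positivity) (by positivity)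
        _ = ((n:ℝ)^m₁ * (1 - β/2)^m) * ((n:ℝ)^m * (n:ℝ)^m) := by
            rw [mul_pow]; ring
        _ ≤ E * ((n:ℝ)^m * (n:ℝ)^m) := mul_le_mul_of_nonneg_right hkey (by positivity)
    have hBbase : ((n - (m₁ - C.card) : ℕ) : ℝ) ≤ (n:ℝ) * Real.exp (-((1 - γ) * m₁ / n)) := by
      have hcastB : ((n - (m₁ - C.card) : ℕ) : ℝ) = (n:ℝ) - ((m₁ - C.card : ℕ):ℝ) :=
        Nat.cast_sub (le_trans (Nat.sub_le _ _) hm₁n)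
      have hcastB2 : ((m₁ - C.card : ℕ):ℝ) = (m₁:ℝ) - C.card := Nat.cast_sub hCm₁
      have h9 : (1 - γ) * m₁ ≤ (m₁:ℝ) - C.card := by nlinarith [hC]
      have h10 : 1 - (1 - γ) * m₁ / n ≤ Real.exp (-((1 - γ) * m₁ / n)) := by
        have h' := Real.add_one_le_exp (-((1 - γ) * m₁ / n)); linarith
      have h11 : (n:ℝ) - (1 - γ) * m₁ = n * (1 - (1 - γ) * m₁ / n) := by field_simp
      rw [hcastB, hcastB2]
      calc (n:ℝ) - ((m₁:ℝ) - C.card) ≤ (n:ℝ) - (1 - γ) * m₁ := by linarith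
        _ = n * (1 - (1 - γ) * m₁ / n) := h11
        _ ≤ n * Real.exp (-((1 - γ) * m₁ / n)) := mul_le_mul_of_nonneg_left h10 hn0.le
    have hB : ((n - (m₁ - C.card) : ℕ) : ℝ)^m ≤ E * (n:ℝ)^m := by
      calc ((n - (m₁ - C.card) : ℕ) : ℝ)^m
          ≤ ((n:ℝ) * Real.exp (-((1 - γ) * m₁ / n)))^m :=
            pow_le_pow_left₀ (Nat.cast_nonneg _) hBbase m
        _ = (n:ℝ)^m * Real.exp (-((1 - γ) * m₁ / n))^m := mul_pow _ _ m
        _ = E * (n:ℝ)^m := by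
            rw [← Real.exp_nat_mul, hE,
              show (m:ℝ) * -((1 - γ) * m₁ / n) = -((1 - γ) * m₁ * m / n) by ring]
            ring
    have hcast : ((d.choose (m₁ - 1) * ((n - d) + (m₁ - 1)) ^ m * n ^ m
        + n ^ m * (n - (m₁ - C.card)) ^ m : ℕ) : ℝ)
        = ((d.choose (m₁-1)) : ℝ) * (((n-d:ℕ):ℝ) + ((m₁-1:ℕ):ℝ))^m * (n:ℝ)^m
          + (n:ℝ)^m * ((n - (m₁ - C.card) : ℕ):ℝ)^m := by
      push_cast
      ring
    have hsum : (K:ℝ) ≤ 2 * E * ((n:ℝ)^m * (n:ℝ)^m) := by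
      calc (K:ℝ) ≤ ((d.choose (m₁ - 1) * ((n - d) + (m₁ - 1)) ^ m * n ^ m
            + n ^ m * (n - (m₁ - C.card)) ^ m : ℕ) : ℝ) := Nat.cast_le.mpr hcount
        _ = _ := hcast
        _ ≤ E * ((n:ℝ)^m * (n:ℝ)^m) + (n:ℝ)^m * (E * (n:ℝ)^m) :=
            add_le_add hA (mul_le_mul_of_nonneg_left hB (by positivity))
        _ = 2 * E * ((n:ℝ)^m * (n:ℝ)^m) := by ring
    have hpow : ((n:ℝ)^m * (n:ℝ)^m) * ((1:ℝ)/n)^(m+m) = 1 := by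
      rw [one_div, inv_pow, ← pow_add]
      exact mul_inv_cancel₀ (by positivity)
    calc (K:ℝ) * ((1:ℝ)/n)^(m+m)
        ≤ (2 * E * ((n:ℝ)^m * (n:ℝ)^m)) * ((1:ℝ)/n)^(m+m) :=
          mul_le_mul_of_nonneg_right hsum (by positivity)
      _ = 2 * E * (((n:ℝ)^m * (n:ℝ)^m) * ((1:ℝ)/n)^(m+m)) := by ring
      _ = 2 * E := by rw [hpow, mul_one]
  -- assemble
  have hne : ((n:ENNReal)) ≠ 0 := by
    exact Nat.cast_ne_zero.mpr (by omega)
  have hfin : (K : ENNReal) * ((1:ENNReal) / n) ^ (m + m) ≠ ⊤ := by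
    exact ENNReal.mul_ne_top (ENNReal.natCast_ne_top K)
      (ENNReal.pow_ne_top (ENNReal.div_lt_top ENNReal.one_ne_top hne).ne)
  have htr := ENNReal.toReal_mono hfin hμ
  rw [ENNReal.toReal_mul, ENNReal.toReal_pow, ENNReal.toReal_div, ENNReal.toReal_one,
    ENNReal.toReal_natCast, ENNReal.toReal_natCast] at htr
  exact htr.trans hfinal
end

section
/- Let Σ be a finite alphabet of size t ≥ 2, let X_1 be a fixed word of length m over Σ, and let X_2 be a random word of length m whose characters are independent and uniformly distributed on Σ. Let β, ε be real numbers with 0 < ε < 1/3 and β + 1/t + ε ≤ 1. Then the probability that the relative Hamming distance diff(X_1, X_2) is at most β (equivalently, the number of positions i with X_1[i] = X_2[i] is at least (1−β)·m) is at most e^{−(ε²·m)/3}. -/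
open MeasureTheory ProbabilityTheory Real

/-- Let `Σ` be an alphabet of size `t ≥ 2`, `X₁` a fixed word of length `m`, and `X₂` a random
word of length `m` with independent uniformly distributed characters.  If `0 < ε < 1/3` and
`β + 1/t + ε ≤ 1`, then the probability that the relative Hamming distance `diff(X₁, X₂) ≤ β`
(i.e. the number of mismatched positions is at most `β·m`) is at most `e^{−ε²·m/3}`. -/
theorem random_word_match_prob
    {A : Type*} [Fintype A] [DecidableEq A] [MeasurableSpace A] [MeasurableSingletonClass A]
    {Ω : Type*} [MeasurableSpace Ω] (μ : Measure Ω) [IsProbabilityMeasure μ]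
    (t : ℕ) (ht : Fintype.card A = t) (ht2 : 2 ≤ t)
    (m : ℕ) (X₁ : Fin m → A) (X₂ : Fin m → Ω → A)
    (hmeas : ∀ i, Measurable (X₂ i))
    (hind : iIndepFun X₂ μ)
    (hunif : ∀ i a, μ {ω | X₂ i ω = a} = 1 / t)
    (β ε : ℝ) (hε0 : 0 < ε) (hε1 : ε < 1 / 3) (hβ : β + 1 / t + ε ≤ 1) :
    (μ {ω | ((Finset.univ.filter fun i => X₁ i ≠ X₂ i ω).card : ℝ) ≤ β * m}).toReal
      ≤ Real.exp (-(ε ^ 2 * m) / 3) := by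
  classical
  set p : ℝ := (t : ℝ)⁻¹ with hp
  have htR : (2 : ℝ) ≤ t := by exact_mod_cast ht2
  have ht0 : (0 : ℝ) < t := by linarith
  have hp_pos : 0 < p := inv_pos.mpr ht0
  have hp_half : p ≤ 1 / 2 := by
    rw [hp]
    rw [inv_le_comm₀ (by positivity) (by norm_num)]
    simpa using htR
  -- indicator variables for matches
  set Y : Fin m → Ω → ℝ := fun i ω => if X₂ i ω = X₁ i then 1 else 0 with hYdef
  have hYmeas : ∀ i, Measurable (Y i) := fun i =>
    Measurable.ite ((hmeas i) (measurableSet_singleton (X₁ i))) measurable_const measurable_const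
  have hYind : iIndepFun Y μ := by
    have h := hind.comp (fun i a => if a = X₁ i then (1 : ℝ) else 0)
      (fun i => measurable_of_countable _)
    exact h
  have hm0 : (0 : ℝ) ≤ m := Nat.cast_nonneg m
  have hSeq : (∑ i, Y i) = fun ω => ∑ i, Y i ω := by
    funext ω; simp [Finset.sum_apply]
  have hSle : ∀ ω, (∑ i, Y i) ω ≤ m := by
    intro ω
    rw [hSeq]
    calc (∑ i, Y i ω) ≤ ∑ _i : Fin m, (1 : ℝ) := by
          refine Finset.sum_le_sum fun i _ => ?_
          simp only [hYdef]
          split <;> norm_num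
      _ = m := by simp
  have hSmeas : Measurable (∑ i, Y i) := by
    rw [hSeq]
    exact Finset.measurable_sum _ fun i _ => hYmeas i
  -- event inclusion
  have hsub : {ω | ((Finset.univ.filter fun i => X₁ i ≠ X₂ i ω).card : ℝ) ≤ β * m}
      ⊆ {ω | (p + ε) * m ≤ (∑ i, Y i) ω} := by
    intro ω hω
    simp only [Set.mem_setOf_eq] at hω ⊢
    have hval : (∑ i, Y i) ω
        = ((Finset.univ.filter fun i => X₂ i ω = X₁ i).card : ℝ) := by
      rw [hSeq]
      simp [hYdef, Finset.sum_boole]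
    have hcount : (Finset.univ.filter fun i => X₁ i ≠ X₂ i ω).card
        + (Finset.univ.filter fun i => X₂ i ω = X₁ i).card = m := by
      have h := Finset.card_filter_add_card_filter_not
        (s := (Finset.univ : Finset (Fin m))) (p := fun i => X₁ i ≠ X₂ i ω)
      simp only [Finset.card_univ, Fintype.card_fin, not_not] at h
      have heq : (Finset.univ.filter fun i => X₂ i ω = X₁ i)
          = (Finset.univ.filter fun a => X₁ a = X₂ a ω) := by
        apply Finset.filter_congr
        intro i _
        simp [eq_comm]
      rw [heq]
      exact h
    have hcountR : ((Finset.univ.filter fun i => X₂ i ω = X₁ i).card : ℝ)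
        = m - ((Finset.univ.filter fun i => X₁ i ≠ X₂ i ω).card : ℝ) := by
      have := congrArg (fun n : ℕ => (n : ℝ)) hcount
      push_cast at this
      linarith
    rw [hval, hcountR]
    have hβ' : p + ε ≤ 1 - β := by
      have : (1 : ℝ) / t = p := one_div (t : ℝ)
      linarith [hβ, this.symm.le, this.le]
    nlinarith
  -- integrability
  have h_int : Integrable (fun ω => exp (ε * (∑ i, Y i) ω)) μ := by
    refine (integrable_const (Real.exp (ε * m))).mono'
      ((hSmeas.const_mul ε).exp.aestronglyMeasurable) (ae_of_all _ fun ω => ?_)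
    rw [Real.norm_eq_abs, abs_of_pos (Real.exp_pos _), Real.exp_le_exp]
    exact mul_le_mul_of_nonneg_left (hSle ω) hε0.le
  -- Chernoff
  have hchern := measure_ge_le_exp_mul_mgf (μ := μ) (X := ∑ i, Y i) ((p + ε) * m) hε0.le h_int
  -- per-coordinate mgf
  have hBtoReal : ∀ i, (μ {ω | X₂ i ω = X₁ i}).toReal = p := by
    intro i
    rw [hunif i (X₁ i), hp]
    rw [one_div, ENNReal.toReal_inv]
    simp
  have hmgf : ∀ i, mgf (Y i) μ ε = 1 + (exp ε - 1) * p := by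
    intro i
    have hBmeas : MeasurableSet {ω | X₂ i ω = X₁ i} :=
      (hmeas i) (measurableSet_singleton (X₁ i))
    have hfun : (fun ω => exp (ε * Y i ω))
        = fun ω => {ω | X₂ i ω = X₁ i}.indicator (fun _ => exp ε - 1) ω + 1 := by
      funext ω
      by_cases h : X₂ i ω = X₁ i <;>
        simp [hYdef, h, Set.indicator_apply, Set.mem_setOf_eq]
    rw [mgf, hfun, integral_add ((integrable_const _).indicator hBmeas) (integrable_const _),
      integral_indicator_const _ hBmeas, integral_const, probReal_univ]
    rw [measureReal_def, hBtoReal i]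
    simp [smul_eq_mul]
    ring
  have hexp : exp ε ≤ 1 + ε + ε ^ 2 := by
    have h := Real.exp_bound (x := ε) (by rw [abs_of_pos hε0]; linarith) (n := 2) (by norm_num)
    have hsum : (∑ i ∈ Finset.range 2, ε ^ i / (Nat.factorial i : ℝ)) = 1 + ε := by
      simp [Finset.sum_range_succ]
    rw [hsum, abs_of_pos hε0] at h
    have h2 := (abs_sub_le_iff.mp h).1
    have h3 : ε ^ 2 * ((2 + 1 : ℕ) / ((Nat.factorial 2 : ℕ) * 2 : ℝ)) = ε ^ 2 * (3 / 4) := by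
      norm_num [Nat.factorial]
    nlinarith [sq_nonneg ε]
  have hmgf_le : ∀ i : Fin m, mgf (Y i) μ ε ≤ exp (p * (ε + ε ^ 2)) := by
    intro i
    rw [hmgf i]
    have h1 : 1 + (exp ε - 1) * p ≤ exp ((exp ε - 1) * p) := by
      have := Real.add_one_le_exp ((exp ε - 1) * p)
      linarith
    refine h1.trans (Real.exp_le_exp.mpr ?_)
    have h2 : exp ε - 1 ≤ ε + ε ^ 2 := by linarith
    nlinarith [hp_pos.le]
  -- combine
  have hmgf_sum : mgf (∑ i, Y i) μ ε = ∏ i, mgf (Y i) μ ε :=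
    hYind.mgf_sum hYmeas Finset.univ
  have hprod : (∏ i, mgf (Y i) μ ε) ≤ exp (p * (ε + ε ^ 2)) ^ m := by
    calc (∏ i, mgf (Y i) μ ε) ≤ ∏ _i : Fin m, exp (p * (ε + ε ^ 2)) :=
          Finset.prod_le_prod (fun i _ => mgf_nonneg) fun i _ => hmgf_le i
      _ = exp (p * (ε + ε ^ 2)) ^ m := by simp
  have key : (μ {ω | (p + ε) * m ≤ (∑ i, Y i) ω}).toReal
      ≤ Real.exp (-(ε ^ 2 * m) / 3) := by
    refine hchern.trans ?_
    rw [hmgf_sum]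
    calc Real.exp (-ε * ((p + ε) * m)) * ∏ i, mgf (Y i) μ ε
        ≤ Real.exp (-ε * ((p + ε) * m)) * exp (p * (ε + ε ^ 2)) ^ m :=
          mul_le_mul_of_nonneg_left hprod (Real.exp_pos _).le
      _ = Real.exp (-ε * ((p + ε) * m) + m * (p * (ε + ε ^ 2))) := by
          rw [← Real.exp_nat_mul, ← Real.exp_add]
      _ ≤ Real.exp (-(ε ^ 2 * m) / 3) := by
          rw [Real.exp_le_exp]
          nlinarith [mul_nonneg (sq_nonneg ε) hm0, hp_half, hm0, sq_nonneg ε]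
  calc (μ {ω | ((Finset.univ.filter fun i => X₁ i ≠ X₂ i ω).card : ℝ) ≤ β * m}).toReal
      ≤ (μ {ω | (p + ε) * m ≤ (∑ i, Y i) ω}).toReal :=
        ENNReal.toReal_mono (measure_ne_top μ _) (measure_mono hsub)
    _ ≤ Real.exp (-(ε ^ 2 * m) / 3) := key
end

section
/- Let b_1, ..., b_m be independent {0,1}-valued random variables such that each b_i takes value 1 with probability at most α (a value 1 at position i represents a mutation at that position). Let ε ∈ (0,1/3), let c = e^{−ε²/3}, and let y be a positive integer with y ≤ m. Then the probability that there exists some t with y ≤ t ≤ m such that b_1 + ... + b_t > (α+ε)·t is at most c^y / (1−c). -/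
open MeasureTheory ProbabilityTheory Real

private lemma exp_mul_le_aux (s x : ℝ) (hx : |x| ≤ 1) :
    Real.exp (s * x) ≤ (Real.exp s + Real.exp (-s)) / 2 +
      x * ((Real.exp s - Real.exp (-s)) / 2) := by
  obtain ⟨hx1, hx2⟩ := abs_le.1 hx
  have ha : (0 : ℝ) ≤ (1 + x) / 2 := by linarith
  have hb : (0 : ℝ) ≤ (1 - x) / 2 := by linarith
  have hab : (1 + x) / 2 + (1 - x) / 2 = 1 := by ring
  have := convexOn_exp.2 (Set.mem_univ s) (Set.mem_univ (-s)) ha hb hab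
  simp only [smul_eq_mul] at this
  have h1 : (1 + x) / 2 * s + (1 - x) / 2 * -s = s * x := by ring
  rw [h1] at this
  calc Real.exp (s * x) ≤ (1 + x) / 2 * Real.exp s + (1 - x) / 2 * Real.exp (-s) := this
    _ = (Real.exp s + Real.exp (-s)) / 2 + x * ((Real.exp s - Real.exp (-s)) / 2) := by ring

private lemma mgf_le_of_centered {Ω : Type*} [MeasurableSpace Ω] (μ : Measure Ω)
    [IsProbabilityMeasure μ] (X : Ω → ℝ) (hX : Measurable X) (hbd : ∀ ω, |X ω| ≤ 1)
    (hmean : ∫ ω, X ω ∂μ = 0) (s : ℝ) :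
    mgf X μ s ≤ Real.exp (s ^ 2 / 2) := by
  have hXint : Integrable X μ := by
    refine Integrable.mono' (integrable_const 1) hX.aestronglyMeasurable ?_
    exact ae_of_all _ hbd
  have hexp_int : Integrable (fun ω => Real.exp (s * X ω)) μ := by
    refine Integrable.mono' (integrable_const (Real.exp |s|))
      (measurable_exp.comp (measurable_const.mul hX)).aestronglyMeasurable ?_
    refine ae_of_all _ fun ω => ?_
    rw [Real.norm_eq_abs, abs_of_nonneg (Real.exp_pos _).le]
    refine Real.exp_le_exp.2 ?_
    calc s * X ω ≤ |s * X ω| := le_abs_self _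
      _ = |s| * |X ω| := abs_mul _ _
      _ ≤ |s| * 1 := mul_le_mul_of_nonneg_left (hbd ω) (abs_nonneg s)
      _ = |s| := mul_one _
  have hrhs_int : Integrable (fun ω => (Real.exp s + Real.exp (-s)) / 2 +
      X ω * ((Real.exp s - Real.exp (-s)) / 2)) μ :=
    (integrable_const _).add (hXint.mul_const _)
  calc mgf X μ s = ∫ ω, Real.exp (s * X ω) ∂μ := rfl
    _ ≤ ∫ ω, ((Real.exp s + Real.exp (-s)) / 2 +
          X ω * ((Real.exp s - Real.exp (-s)) / 2)) ∂μ :=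
        integral_mono hexp_int hrhs_int fun ω => exp_mul_le_aux s (X ω) (hbd ω)
    _ = (Real.exp s + Real.exp (-s)) / 2 +
          (∫ ω, X ω ∂μ) * ((Real.exp s - Real.exp (-s)) / 2) := by
        rw [integral_add (integrable_const _) (hXint.mul_const _), integral_const,
          integral_mul_const]
        simp
    _ = Real.cosh s := by rw [hmean, Real.cosh_eq]; ring
    _ ≤ Real.exp (s ^ 2 / 2) := Real.cosh_le_exp_half_sq s

/-- Let `b 1, ..., b m` be independent `{0,1}`-valued random variables, each taking value `1`
(a mutation) with probability at most `α`.  Let `0 < ε < 1/3`, `c = e^{−ε²/3}`, and let `y` be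
a positive integer with `y ≤ m`.  Then the probability that for some `t` with `y ≤ t ≤ m` the
first `t` variables sum to more than `(α+ε)·t` is at most `c^y / (1−c)`. -/
theorem mutation_prefix_bound
    {Ω : Type*} [MeasurableSpace Ω] (μ : Measure Ω) [IsProbabilityMeasure μ]
    (m : ℕ) (b : Fin m → Ω → ℝ)
    (hmeas : ∀ i, Measurable (b i))
    (hind : iIndepFun b μ)
    (h01 : ∀ i ω, b i ω = 0 ∨ b i ω = 1)
    (α : ℝ) (hα0 : 0 ≤ α) (hα1 : α ≤ 1)
    (hub : ∀ i, (μ {ω | b i ω = 1}).toReal ≤ α)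
    (ε : ℝ) (hε0 : 0 < ε) (hε1 : ε < 1 / 3)
    (y : ℕ) (hy0 : 0 < y) (hym : y ≤ m) :
    (μ {ω | ∃ t : ℕ, y ≤ t ∧ t ≤ m ∧
        (α + ε) * t < ∑ i ∈ Finset.univ.filter fun i : Fin m => (i : ℕ) < t, b i ω}).toReal
      ≤ Real.exp (-ε ^ 2 / 3) ^ y / (1 - Real.exp (-ε ^ 2 / 3)) := by
  classical
  set F : ℕ → Finset (Fin m) := fun t => Finset.univ.filter fun i : Fin m => (i : ℕ) < t with hF
  have hb01 : ∀ i ω, 0 ≤ b i ω ∧ b i ω ≤ 1 := by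
    intro i ω; rcases h01 i ω with h | h <;> rw [h] <;> norm_num
  have hbint : ∀ i, Integrable (b i) μ := by
    intro i
    refine Integrable.mono' (integrable_const 1) (hmeas i).aestronglyMeasurable ?_
    refine ae_of_all _ fun ω => ?_
    rw [Real.norm_eq_abs, abs_of_nonneg (hb01 i ω).1]; exact (hb01 i ω).2
  set c : Fin m → ℝ := fun i => ∫ ω, b i ω ∂μ with hc
  have hc0 : ∀ i, 0 ≤ c i := fun i => integral_nonneg fun ω => (hb01 i ω).1
  have hcα : ∀ i, c i ≤ α := by
    intro i
    have hind_eq : b i = Set.indicator {ω | b i ω = 1} (fun _ => (1 : ℝ)) := by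
      funext ω
      rcases h01 i ω with h | h <;> simp [Set.indicator_apply, h]
    have hs : MeasurableSet {ω | b i ω = 1} := (hmeas i) (measurableSet_singleton 1)
    have : c i = (μ {ω | b i ω = 1}).toReal := by
      rw [hc]; simp only
      rw [hind_eq, integral_indicator_const (1 : ℝ) hs]
      simp [measureReal_def]
    rw [this]; exact hub i
  have hc1 : ∀ i, c i ≤ 1 := fun i => (hcα i).trans hα1
  set X : Fin m → Ω → ℝ := fun i ω => b i ω - c i with hX
  have hXmeas : ∀ i, Measurable (X i) := fun i => (hmeas i).sub measurable_const
  have hXind : iIndepFun X μ :=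
    hind.comp (fun i x => x - c i) fun i => measurable_id.sub measurable_const
  have hXbd : ∀ i ω, |X i ω| ≤ 1 := by
    intro i ω
    rw [abs_le, hX]
    constructor
    · simp only; linarith [(hb01 i ω).1, hc1 i]
    · simp only; linarith [(hb01 i ω).2, hc0 i]
  have hXmean : ∀ i, ∫ ω, X i ω ∂μ = 0 := by
    intro i
    rw [hX]; simp only
    rw [integral_sub (hbint i) (integrable_const _), integral_const]
    simp [hc]
  have hmgf : ∀ i, mgf (X i) μ ε ≤ Real.exp (ε ^ 2 / 2) := fun i =>
    mgf_le_of_centered μ (X i) (hXmeas i) (hXbd i) (hXmean i) ε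
  have hexpint : ∀ i, Integrable (fun ω => Real.exp (ε * X i ω)) μ := by
    intro i
    refine Integrable.mono' (integrable_const (Real.exp ε))
      (measurable_exp.comp (measurable_const.mul (hXmeas i))).aestronglyMeasurable ?_
    refine ae_of_all _ fun ω => ?_
    rw [Real.norm_eq_abs, abs_of_nonneg (Real.exp_pos _).le]
    refine Real.exp_le_exp.2 ?_
    have h1 : X i ω ≤ 1 := (abs_le.1 (hXbd i ω)).2
    nlinarith
  -- per-t bound
  have key : ∀ t : ℕ, y ≤ t → t ≤ m →
      (μ {ω | (α + ε) * t < ∑ i ∈ F t, b i ω}).toReal ≤ Real.exp (-ε ^ 2 / 3) ^ t := by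
    intro t hyt htm
    have hcard : (F t).card = t := by
      have h1 : ∀ k ∈ Finset.range t, k < m := fun k hk =>
        lt_of_lt_of_le (Finset.mem_range.1 hk) htm
      have : F t = (Finset.range t).attachFin h1 := by
        ext i; simp [hF, Finset.mem_attachFin]
      rw [this, Finset.card_attachFin, Finset.card_range]
    have hsub : {ω | (α + ε) * t < ∑ i ∈ F t, b i ω} ⊆
        {ω | (ε * t : ℝ) ≤ (∑ i ∈ F t, X i) ω} := by
      intro ω hω
      simp only [Set.mem_setOf_eq] at hω ⊢
      have hsum : (∑ i ∈ F t, X i) ω = (∑ i ∈ F t, b i ω) - ∑ i ∈ F t, c i := by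
        rw [Finset.sum_apply]
        simp only [hX]
        rw [Finset.sum_sub_distrib]
      have hsc : ∑ i ∈ F t, c i ≤ α * t := by
        calc ∑ i ∈ F t, c i ≤ (F t).card • α :=
              Finset.sum_le_card_nsmul _ _ _ fun i _ => hcα i
          _ = α * t := by rw [hcard, nsmul_eq_mul]; ring
      rw [hsum]; linarith
    have hint_sum : Integrable (fun ω => Real.exp (ε * (∑ i ∈ F t, X i) ω)) μ :=
      hXind.integrable_exp_mul_sum hXmeas fun i _ => hexpint i
    have chern := measure_ge_le_exp_mul_mgf (X := ∑ i ∈ F t, X i) (μ := μ) (t := ε)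
      (ε * t) hε0.le hint_sum
    have hmgf_sum : mgf (∑ i ∈ F t, X i) μ ε ≤ Real.exp (ε ^ 2 / 2) ^ t := by
      rw [hXind.mgf_sum hXmeas (F t)]
      calc ∏ i ∈ F t, mgf (X i) μ ε ≤ ∏ _i ∈ F t, Real.exp (ε ^ 2 / 2) :=
            Finset.prod_le_prod (fun i _ => mgf_nonneg) fun i _ => hmgf i
        _ = Real.exp (ε ^ 2 / 2) ^ t := by rw [Finset.prod_const, hcard]
    calc (μ {ω | (α + ε) * t < ∑ i ∈ F t, b i ω}).toReal
        ≤ (μ {ω | (ε * t : ℝ) ≤ (∑ i ∈ F t, X i) ω}).toReal :=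
          ENNReal.toReal_mono (measure_ne_top _ _) (measure_mono hsub)
      _ ≤ Real.exp (-ε * (ε * t)) * mgf (∑ i ∈ F t, X i) μ ε := chern
      _ ≤ Real.exp (-ε * (ε * t)) * Real.exp (ε ^ 2 / 2) ^ t := by
          exact mul_le_mul_of_nonneg_left hmgf_sum (Real.exp_pos _).le
      _ = Real.exp (-ε * (ε * t) + (t : ℝ) * (ε ^ 2 / 2)) := by
          rw [Real.exp_add, ← Real.exp_nat_mul]
      _ ≤ Real.exp (-ε ^ 2 / 3 * t) := by
          refine Real.exp_le_exp.2 ?_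
          have ht0 : (0 : ℝ) ≤ t := Nat.cast_nonneg t
          nlinarith [sq_nonneg ε, mul_nonneg (sq_nonneg ε) ht0]
      _ = Real.exp (-ε ^ 2 / 3) ^ t := by rw [← Real.exp_nat_mul]; ring_nf
  -- union bound
  have hclt1 : Real.exp (-ε ^ 2 / 3) < 1 := by
    rw [Real.exp_lt_one_iff]
    have := pow_pos hε0 2
    linarith
  have hsubset : {ω | ∃ t : ℕ, y ≤ t ∧ t ≤ m ∧ (α + ε) * t < ∑ i ∈ F t, b i ω} ⊆
      ⋃ t ∈ Finset.Icc y m, {ω | (α + ε) * t < ∑ i ∈ F t, b i ω} := by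
    intro ω ⟨t, ht1, ht2, ht3⟩
    exact Set.mem_biUnion (Finset.mem_Icc.2 ⟨ht1, ht2⟩) ht3
  calc (μ {ω | ∃ t : ℕ, y ≤ t ∧ t ≤ m ∧ (α + ε) * t < ∑ i ∈ F t, b i ω}).toReal
      ≤ (μ (⋃ t ∈ Finset.Icc y m, {ω | (α + ε) * t < ∑ i ∈ F t, b i ω})).toReal :=
        ENNReal.toReal_mono (measure_ne_top _ _) (measure_mono hsubset)
    _ ≤ ∑ t ∈ Finset.Icc y m, (μ {ω | (α + ε) * t < ∑ i ∈ F t, b i ω}).toReal := by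
        rw [← ENNReal.toReal_sum fun t _ => measure_ne_top μ _]
        refine ENNReal.toReal_mono ?_ (measure_biUnion_finset_le _ _)
        exact (ENNReal.sum_lt_top.2 fun t _ => measure_lt_top μ _).ne
    _ ≤ ∑ t ∈ Finset.Icc y m, Real.exp (-ε ^ 2 / 3) ^ t :=
        Finset.sum_le_sum fun t ht => key t (Finset.mem_Icc.1 ht).1 (Finset.mem_Icc.1 ht).2
    _ = ∑ t ∈ Finset.Ico y (m + 1), Real.exp (-ε ^ 2 / 3) ^ t := by
        rw [Finset.Ico_add_one_right_eq_Icc]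
    _ ≤ Real.exp (-ε ^ 2 / 3) ^ y / (1 - Real.exp (-ε ^ 2 / 3)) :=
        geom_sum_Ico_le_of_lt_one (Real.exp_pos _).le hclt1
end
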